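/- Let (c_n) be a sequence of nonnegative extended reals and α ∈ (0,1). Define J := limsup_{n→∞} (1/n) Σ_{k=0}^{n−1} c_k and m_α := (1−α) Σ_{n=0}^∞ α^n c_n. Then limsup_{α↑1} m_α ≤ J. -/

import Mathlib

open Filter
open scoped ENNReal

private lemma shift_tsum (f : ℕ → ℝ≥0∞) (k : ℕ) :
    (∑' n : ℕ, if k ≤ n then f n else 0) = ∑' m : ℕ, f (m + k) := by
  have hinj : Function.Injective (fun m : ℕ => m + k) := fun a b h => by simpa using h
  have hsupp : Function.support (fun n : ℕ => if k ≤ n then f n else 0)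
      ⊆ Set.range (fun m : ℕ => m + k) := by
    intro n hn
    simp only [Function.mem_support, ne_eq, ite_eq_right_iff, not_forall] at hn
    obtain ⟨hkn, -⟩ := hn
    exact ⟨n - k, by simp only []; omega⟩
  rw [← Function.Injective.tsum_eq hinj hsupp]
  exact tsum_congr fun m => by simp

private lemma abel_aux (a : ℝ≥0∞) (ha : a < 1) (c : ℕ → ℝ≥0∞) :
    ∑' n : ℕ, a ^ n * c n = (1 - a) * ∑' n : ℕ, a ^ n * ∑ k ∈ Finset.range (n + 1), c k := by
  have h1a : (1 - a) ≠ 0 := by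
    simp only [ne_eq, tsub_eq_zero_iff_le, not_le]
    exact ha
  have h1t : (1 - a) ≠ ⊤ := by
    exact ne_top_of_le_ne_top ENNReal.one_ne_top tsub_le_self
  rw [← ENNReal.tsum_mul_left]
  have key : ∀ n : ℕ, (1 - a) * (a ^ n * ∑ k ∈ Finset.range (n + 1), c k)
      = ∑' k : ℕ, if k ≤ n then (1 - a) * a ^ n * c k else 0 := by
    intro n
    rw [tsum_eq_sum (s := Finset.range (n + 1))
      (by intro b hb; simp only [Finset.mem_range, not_lt] at hb; rw [if_neg (by omega)])]
    rw [Finset.mul_sum, Finset.mul_sum]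
    refine Finset.sum_congr rfl fun b hb => ?_
    simp only [Finset.mem_range, Nat.lt_succ_iff] at hb
    simp [hb, mul_assoc]
  calc ∑' n : ℕ, a ^ n * c n
      = ∑' k : ℕ, ((1 - a) * c k) * ((1 - a)⁻¹ * a ^ k) := by
        refine tsum_congr fun k => ?_
        rw [← mul_assoc, mul_comm (1 - a) (c k), mul_assoc (c k), ENNReal.mul_inv_cancel h1a h1t,
          mul_one, mul_comm]
    _ = ∑' k : ℕ, ((1 - a) * c k) * ∑' n : ℕ, (if k ≤ n then a ^ n else 0) := by
        refine tsum_congr fun k => ?_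
        rw [shift_tsum]
        congr 1
        rw [show (∑' m : ℕ, a ^ (m + k)) = ∑' m : ℕ, a ^ m * a ^ k by
          exact tsum_congr fun m => pow_add a m k]
        rw [ENNReal.tsum_mul_right, ENNReal.tsum_geometric]
    _ = ∑' k : ℕ, ∑' n : ℕ, (if k ≤ n then (1 - a) * a ^ n * c k else 0) := by
        refine tsum_congr fun k => ?_
        rw [← ENNReal.tsum_mul_left]
        refine tsum_congr fun n => ?_
        by_cases h : k ≤ n <;> simp [h] <;> try ring
    _ = ∑' n : ℕ, ∑' k : ℕ, (if k ≤ n then (1 - a) * a ^ n * c k else 0) := ENNReal.tsum_comm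
    _ = ∑' n : ℕ, (1 - a) * (a ^ n * ∑ k ∈ Finset.range (n + 1), c k) := by
        exact tsum_congr fun n => (key n).symm

theorem stmt_10 (c : ℕ → ℝ≥0∞) :
    Filter.limsup
      (fun α : ℝ => (1 - ENNReal.ofReal α) * ∑' n : ℕ, (ENNReal.ofReal α) ^ n * c n)
      (nhdsWithin 1 (Set.Ioo (0:ℝ) 1))
    ≤ Filter.atTop.limsup (fun n : ℕ => (∑ k ∈ Finset.range n, c k) / (n : ℝ≥0∞)) := by
  set J := Filter.atTop.limsup (fun n : ℕ => (∑ k ∈ Finset.range n, c k) / (n : ℝ≥0∞)) with hJ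
  refine le_of_forall_gt_imp_ge_of_dense fun b hb => ?_
  obtain ⟨b', hJb', hb'b⟩ := exists_between hb
  have hb't : b' ≠ ⊤ := (hb'b.trans_le le_top).ne
  -- eventually Cesàro averages ≤ b'
  have hev : ∀ᶠ n in atTop, (∑ k ∈ Finset.range n, c k) / (n : ℝ≥0∞) < b' :=
    eventually_lt_of_limsup_lt hJb'
  obtain ⟨N₀, hN₀⟩ := eventually_atTop.1 hev
  set N := max N₀ 1 with hN
  have hN1 : 1 ≤ N := le_max_right _ _
  have hSbound : ∀ n : ℕ, N ≤ n → (∑ k ∈ Finset.range n, c k) ≤ b' * n := by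
    intro n hn
    have h1 : (∑ k ∈ Finset.range n, c k) / (n : ℝ≥0∞) ≤ b' :=
      (hN₀ n (le_trans (le_max_left _ _) hn)).le
    have hn0 : (n : ℝ≥0∞) ≠ 0 := by
      simp only [ne_eq, Nat.cast_eq_zero]; omega
    exact (ENNReal.div_le_iff_le_mul (Or.inl hn0) (Or.inl (ENNReal.natCast_ne_top n))).1 h1
  have hSN : (∑ k ∈ Finset.range N, c k) ≠ ⊤ := by
    refine ne_top_of_le_ne_top ?_ (hSbound N le_rfl)
    exact ENNReal.mul_ne_top hb't (ENNReal.natCast_ne_top N)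
  -- pointwise bound on partial sums
  have hpt : ∀ n : ℕ, (∑ k ∈ Finset.range (n + 1), c k)
      ≤ (∑ k ∈ Finset.range N, c k) + b' * (n + 1 : ℕ) := by
    intro n
    rcases le_or_gt N (n + 1) with h | h
    · exact (hSbound (n + 1) h).trans (le_add_left le_rfl)
    · refine le_trans ?_ (le_add_right le_rfl)
      exact Finset.sum_le_sum_of_subset (Finset.range_subset_range.2 h.le)
  -- main estimate for each α ∈ Ioo 0 1
  have hmain : ∀ α : ℝ, α ∈ Set.Ioo (0:ℝ) 1 →
      (1 - ENNReal.ofReal α) * ∑' n : ℕ, (ENNReal.ofReal α) ^ n * c n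
        ≤ (1 - ENNReal.ofReal α) * (∑ k ∈ Finset.range N, c k) + b' := by
    intro α hα
    set a := ENNReal.ofReal α with hadef
    have ha1 : a < 1 := by
      rw [hadef, ← ENNReal.ofReal_one]
      exact (ENNReal.ofReal_lt_ofReal_iff one_pos).2 hα.2
    have h1a0 : (1 - a) ≠ 0 := by
      simp only [ne_eq, tsub_eq_zero_iff_le, not_le]; exact ha1
    have h1at : (1 - a) ≠ ⊤ := ne_top_of_le_ne_top ENNReal.one_ne_top tsub_le_self
    have hcanc : (1 - a) * (1 - a)⁻¹ = 1 := ENNReal.mul_inv_cancel h1a0 h1at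
    -- geometric-weight identity: (1-a) * ∑' aⁿ·(n+1) = (1-a)⁻¹
    have hT : (1 - a) * ∑' n : ℕ, a ^ n * ((n + 1 : ℕ) : ℝ≥0∞) = (1 - a)⁻¹ := by
      have h := abel_aux a ha1 (fun _ => 1)
      simp only [mul_one, Finset.sum_const, Finset.card_range, nsmul_eq_mul] at h
      rw [ENNReal.tsum_geometric] at h
      exact h.symm
    rw [abel_aux a ha1 c]
    calc (1 - a) * ((1 - a) * ∑' n : ℕ, a ^ n * ∑ k ∈ Finset.range (n + 1), c k)
        ≤ (1 - a) * ((1 - a) * ∑' n : ℕ,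
            (a ^ n * (∑ k ∈ Finset.range N, c k) + b' * (a ^ n * ((n + 1 : ℕ) : ℝ≥0∞)))) := by
          gcongr with n
          calc a ^ n * ∑ k ∈ Finset.range (n + 1), c k
              ≤ a ^ n * ((∑ k ∈ Finset.range N, c k) + b' * ((n + 1 : ℕ) : ℝ≥0∞)) := by
                gcongr; exact hpt n
            _ = a ^ n * (∑ k ∈ Finset.range N, c k) + b' * (a ^ n * ((n + 1 : ℕ) : ℝ≥0∞)) := by
                ring
      _ = (1 - a) * (∑ k ∈ Finset.range N, c k) + b' := by
          rw [ENNReal.tsum_add, ENNReal.tsum_mul_right, ENNReal.tsum_mul_left,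
            ENNReal.tsum_geometric]
          have habstract : ∀ u v T S B : ℝ≥0∞, u * v = 1 → u * T = v →
              u * (u * (v * S + B * T)) = u * S + B := by
            intro u v T S B h1 h2
            calc u * (u * (v * S + B * T))
                = (u * v) * (u * S) + B * (u * (u * T)) := by ring
              _ = u * S + B := by rw [h1, h2, h1]; ring
          exact habstract (1 - a) (1 - a)⁻¹ _ _ b' hcanc hT
  -- the error term tends to 0
  have htend : Tendsto (fun α : ℝ => (1 - ENNReal.ofReal α) * (∑ k ∈ Finset.range N, c k))
      (nhdsWithin 1 (Set.Ioo (0:ℝ) 1)) (nhds 0) := by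
    have h1 : Tendsto (fun α : ℝ => (1 : ℝ) - α) (nhdsWithin 1 (Set.Ioo (0:ℝ) 1)) (nhds 0) := by
      have h0 : Tendsto (fun α : ℝ => (1 : ℝ) - α) (nhds 1) (nhds (1 - 1)) :=
        (continuous_const.sub continuous_id).tendsto 1
      simpa using h0.mono_left nhdsWithin_le_nhds
    have h2 : Tendsto (fun α : ℝ => ENNReal.ofReal (1 - α))
        (nhdsWithin 1 (Set.Ioo (0:ℝ) 1)) (nhds 0) := by
      have := (ENNReal.continuous_ofReal.tendsto 0).comp h1
      simpa [Function.comp_def] using this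
    have h3 : Tendsto (fun α : ℝ => ENNReal.ofReal (1 - α) * (∑ k ∈ Finset.range N, c k))
        (nhdsWithin 1 (Set.Ioo (0:ℝ) 1)) (nhds 0) := by
      have := ENNReal.Tendsto.mul_const h2 (Or.inr hSN)
      simpa using this
    refine h3.congr' ?_
    filter_upwards [self_mem_nhdsWithin] with α hα
    rw [ENNReal.ofReal_sub 1 hα.1.le, ENNReal.ofReal_one]
  have hsmall : ∀ᶠ α in nhdsWithin 1 (Set.Ioo (0:ℝ) 1),
      (1 - ENNReal.ofReal α) * (∑ k ∈ Finset.range N, c k) < b - b' := by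
    refine htend.eventually_lt_const ?_
    simp only [pos_iff_ne_zero, ne_eq, tsub_eq_zero_iff_le, not_le]
    exact hb'b
  refine limsup_le_of_le ?_ ?_
  · exact ⟨0, fun x _ => (zero_le : 0 ≤ x)⟩
  · filter_upwards [hsmall, self_mem_nhdsWithin] with α hα hmem
    calc (1 - ENNReal.ofReal α) * ∑' n : ℕ, (ENNReal.ofReal α) ^ n * c n
        ≤ (1 - ENNReal.ofReal α) * (∑ k ∈ Finset.range N, c k) + b' := hmain α hmem
      _ ≤ (b - b') + b' := add_le_add hα.le le_rfl
      _ = b := tsub_add_cancel_of_le hb'b.le
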